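/- For an odd positive integer k and an integer m, define G_m(k) = ((1−i)/2 + (−1/k)(1+i)/2) · ∑_{a mod k} (a/k) e(am/k), where (·/k) is the Jacobi symbol and e(z) = exp(2πiz). Then G_m is multiplicative in the sense that if k₁, k₂ are odd positive integers with gcd(k₁,k₂) = 1, then G_m(k₁k₂) = G_m(k₁) G_m(k₂). -/

import Mathlib

open scoped Real

open Finset

/-- The Gauss-type sum `G_m(k)` of Soundararajan. -/
noncomputable def gaussG (m : ℤ) (k : ℕ) : ℂ :=
  ((1 - Complex.I) / 2 + (jacobiSym (-1) k : ℂ) * (1 + Complex.I) / 2) *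
    ∑ a ∈ Finset.range k, (jacobiSym a k : ℂ) * Complex.exp (2 * π * Complex.I * a * m / k)

noncomputable def gaussS (m : ℤ) (k : ℕ) : ℂ :=
  ∑ a ∈ Finset.range k, (jacobiSym a k : ℂ) * Complex.exp (2 * π * Complex.I * a * m / k)

lemma gaussG_eq (m : ℤ) (k : ℕ) :
    gaussG m k = ((1 - Complex.I) / 2 + (jacobiSym (-1) k : ℂ) * (1 + Complex.I) / 2) *
      gaussS m k := rfl

lemma exp_mod (m : ℤ) (k : ℕ) (a : ℕ) :
    Complex.exp (2 * π * Complex.I * ((a % k : ℕ) : ℂ) * m / k) =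
    Complex.exp (2 * π * Complex.I * (a : ℂ) * m / k) := by
  rcases Nat.eq_zero_or_pos k with hk | hk
  · subst hk; simp
  have hk' : (k : ℂ) ≠ 0 := Nat.cast_ne_zero.mpr hk.ne'
  conv_rhs => rw [← Nat.mod_add_div a k]
  generalize a % k = r
  generalize a / k = q
  rw [show (2 * π * Complex.I * ((r + k * q : ℕ) : ℂ) * m / k : ℂ)
      = 2 * π * Complex.I * ((r : ℕ) : ℂ) * m / k
        + (((q : ℕ) * m : ℤ) : ℂ) * (2 * π * Complex.I) from by
    push_cast; field_simp]
  rw [Complex.exp_add, Complex.exp_int_mul_two_pi_mul_I, mul_one]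

lemma range_eq_zmod (k : ℕ) [NeZero k] (F : ℕ → ℂ) :
    ∑ a ∈ Finset.range k, F a = ∑ x : ZMod k, F x.val := by
  obtain ⟨n, rfl⟩ := Nat.exists_eq_succ_of_ne_zero (NeZero.ne k)
  exact (Fin.sum_univ_eq_sum_range (fun i => F i) (n + 1)).symm

lemma gaussS_mul (m : ℤ) (k₁ k₂ : ℕ) (hp₁ : 0 < k₁) (hp₂ : 0 < k₂)
    (hco : Nat.Coprime k₁ k₂) :
    gaussS m (k₁ * k₂) = ((jacobiSym k₂ k₁ * jacobiSym k₁ k₂ : ℤ) : ℂ) *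
      (gaussS m k₁ * gaussS m k₂) := by
  haveI : NeZero k₁ := ⟨hp₁.ne'⟩
  haveI : NeZero k₂ := ⟨hp₂.ne'⟩
  haveI : NeZero (k₁ * k₂) := ⟨Nat.mul_ne_zero hp₁.ne' hp₂.ne'⟩
  have hc₁ : (k₁ : ℂ) ≠ 0 := Nat.cast_ne_zero.mpr hp₁.ne'
  have hc₂ : (k₂ : ℂ) ≠ 0 := Nat.cast_ne_zero.mpr hp₂.ne'
  -- the CRT-type bijection
  set φ : ZMod k₁ × ZMod k₂ → ZMod (k₁ * k₂) :=
    fun p => ((p.1.val * k₂ + p.2.val * k₁ : ℕ) : ZMod (k₁ * k₂)) with hφ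
  have hbij : Function.Bijective φ := by
    rw [Fintype.bijective_iff_injective_and_card]
    constructor
    · intro p q h
      have h1 : (p.1 : ZMod k₁) * k₂ = (q.1 : ZMod k₁) * k₂ := by
        have h' := congrArg (ZMod.castHom (dvd_mul_right k₁ k₂) (ZMod k₁)) h
        rw [hφ] at h'
        simp only [ZMod.castHom_apply, ZMod.cast_natCast (dvd_mul_right k₁ k₂)] at h'
        push_cast at h'
        simpa [ZMod.natCast_self, ZMod.natCast_val, ZMod.cast_id] using h'
      have h2 : (p.2 : ZMod k₂) * k₁ = (q.2 : ZMod k₂) * k₁ := by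
        have h' := congrArg (ZMod.castHom (dvd_mul_left k₂ k₁) (ZMod k₂)) h
        rw [hφ] at h'
        simp only [ZMod.castHom_apply, ZMod.cast_natCast (dvd_mul_left k₂ k₁)] at h'
        push_cast at h'
        simpa [ZMod.natCast_self, ZMod.natCast_val, ZMod.cast_id] using h'
      have hu₁ : IsUnit ((k₂ : ZMod k₁)) :=
        (ZMod.isUnit_iff_coprime k₂ k₁).mpr hco.symm
      have hu₂ : IsUnit ((k₁ : ZMod k₂)) :=
        (ZMod.isUnit_iff_coprime k₁ k₂).mpr hco
      have e1 : p.1 = q.1 := by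
        apply hu₁.mul_left_cancel
        rw [mul_comm _ p.1, mul_comm _ q.1]; exact h1
      have e2 : p.2 = q.2 := by
        apply hu₂.mul_left_cancel
        rw [mul_comm _ p.2, mul_comm _ q.2]; exact h2
      exact Prod.ext e1 e2
    · simp [ZMod.card]
  rw [gaussS, range_eq_zmod (k₁ * k₂),
    ← Fintype.sum_bijective φ hbij _ _ (fun p => rfl)]
  rw [gaussS, range_eq_zmod k₁, gaussS, range_eq_zmod k₂]
  rw [Fintype.sum_prod_type, Finset.sum_mul_sum, Finset.mul_sum]
  refine Finset.sum_congr rfl fun a₁ _ => ?_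
  rw [Finset.mul_sum]
  refine Finset.sum_congr rfl fun a₂ _ => ?_
  -- pointwise identity
  set n : ℕ := a₁.val * k₂ + a₂.val * k₁ with hn
  have hval : (φ (a₁, a₂)).val = n % (k₁ * k₂) := ZMod.val_natCast _ n
  rw [hval]
  -- jacobi part
  have hJ : (jacobiSym ((n % (k₁ * k₂) : ℕ) : ℤ) (k₁ * k₂)) =
      (jacobiSym a₁.val k₁ * jacobiSym k₂ k₁) *
      (jacobiSym a₂.val k₂ * jacobiSym k₁ k₂) := by
    have h0 : ((n % (k₁ * k₂) : ℕ) : ℤ) = (n : ℤ) % ((k₁ * k₂ : ℕ) : ℤ) := by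
      push_cast; rfl
    rw [h0, ← jacobiSym.mod_left, jacobiSym.mul_right]
    have e1 : jacobiSym (n : ℤ) k₁ = jacobiSym ((a₁.val * k₂ : ℕ) : ℤ) k₁ := by
      apply jacobiSym.mod_left'
      rw [hn]
      push_cast
      exact Int.add_mul_emod_self_right _ _ _
    have e2 : jacobiSym (n : ℤ) k₂ = jacobiSym ((a₂.val * k₁ : ℕ) : ℤ) k₂ := by
      apply jacobiSym.mod_left'
      rw [hn]
      push_cast
      rw [add_comm]
      exact Int.add_mul_emod_self_right _ _ _
    rw [e1, e2]
    push_cast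
    rw [jacobiSym.mul_left, jacobiSym.mul_left]
  -- exponential part
  have hE : Complex.exp (2 * π * Complex.I * ((n % (k₁ * k₂) : ℕ) : ℂ) * m / (k₁ * k₂ : ℕ)) =
      Complex.exp (2 * π * Complex.I * (a₁.val : ℂ) * m / k₁) *
      Complex.exp (2 * π * Complex.I * (a₂.val : ℂ) * m / k₂) := by
    rw [exp_mod, ← Complex.exp_add]
    congr 1
    rw [hn]
    generalize a₁.val = b₁
    generalize a₂.val = b₂
    push_cast
    field_simp
  rw [hJ, hE]
  push_cast
  ring

lemma eps_mul (k₁ k₂ : ℕ) (h₁ : Odd k₁) (h₂ : Odd k₂) (hp₁ : 0 < k₁) (hp₂ : 0 < k₂) :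
    ((1 - Complex.I) / 2 + (jacobiSym (-1) (k₁ * k₂) : ℂ) * (1 + Complex.I) / 2) *
      ((-1 : ℂ) ^ (k₁ / 2 * (k₂ / 2))) =
    ((1 - Complex.I) / 2 + (jacobiSym (-1) k₁ : ℂ) * (1 + Complex.I) / 2) *
    ((1 - Complex.I) / 2 + (jacobiSym (-1) k₂ : ℂ) * (1 + Complex.I) / 2) := by
  haveI : NeZero k₁ := ⟨hp₁.ne'⟩
  haveI : NeZero k₂ := ⟨hp₂.ne'⟩
  rw [jacobiSym.mul_right]
  have hm₁ : k₁ % 4 = 1 ∨ k₁ % 4 = 3 := by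
    have := Nat.odd_iff.mp h₁; omega
  have hm₂ : k₂ % 4 = 1 ∨ k₂ % 4 = 3 := by
    have := Nat.odd_iff.mp h₂; omega
  rcases hm₁ with hm₁ | hm₁ <;> rcases hm₂ with hm₂ | hm₂
  · have j1 : jacobiSym (-1) k₁ = 1 := by
      rw [jacobiSym.at_neg_one h₁, ZMod.χ₄_nat_one_mod_four hm₁]
    have j2 : jacobiSym (-1) k₂ = 1 := by
      rw [jacobiSym.at_neg_one h₂, ZMod.χ₄_nat_one_mod_four hm₂]
    have hs : (-1 : ℂ) ^ (k₁ / 2 * (k₂ / 2)) = 1 :=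
      Even.neg_one_pow (Even.mul_right (by rw [Nat.even_iff]; omega) _)
    rw [j1, j2, hs]; push_cast; ring
  · have j1 : jacobiSym (-1) k₁ = 1 := by
      rw [jacobiSym.at_neg_one h₁, ZMod.χ₄_nat_one_mod_four hm₁]
    have j2 : jacobiSym (-1) k₂ = -1 := by
      rw [jacobiSym.at_neg_one h₂, ZMod.χ₄_nat_three_mod_four hm₂]
    have hs : (-1 : ℂ) ^ (k₁ / 2 * (k₂ / 2)) = 1 :=
      Even.neg_one_pow (Even.mul_right (by rw [Nat.even_iff]; omega) _)
    rw [j1, j2, hs]; push_cast; ring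
  · have j1 : jacobiSym (-1) k₁ = -1 := by
      rw [jacobiSym.at_neg_one h₁, ZMod.χ₄_nat_three_mod_four hm₁]
    have j2 : jacobiSym (-1) k₂ = 1 := by
      rw [jacobiSym.at_neg_one h₂, ZMod.χ₄_nat_one_mod_four hm₂]
    have hs : (-1 : ℂ) ^ (k₁ / 2 * (k₂ / 2)) = 1 :=
      Even.neg_one_pow (Even.mul_left (by rw [Nat.even_iff]; omega) _)
    rw [j1, j2, hs]; push_cast; ring
  · have j1 : jacobiSym (-1) k₁ = -1 := by
      rw [jacobiSym.at_neg_one h₁, ZMod.χ₄_nat_three_mod_four hm₁]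
    have j2 : jacobiSym (-1) k₂ = -1 := by
      rw [jacobiSym.at_neg_one h₂, ZMod.χ₄_nat_three_mod_four hm₂]
    have hs : (-1 : ℂ) ^ (k₁ / 2 * (k₂ / 2)) = -1 :=
      Odd.neg_one_pow (Odd.mul (by rw [Nat.odd_iff]; omega) (by rw [Nat.odd_iff]; omega))
    rw [j1, j2, hs]
    push_cast
    linear_combination (-1 : ℂ) * Complex.I_sq

/-- `G_m` is multiplicative: `G_m(k₁k₂) = G_m(k₁)G_m(k₂)` for coprime odd `k₁, k₂`. -/
theorem gaussG_mul (m : ℤ) (k₁ k₂ : ℕ) (h₁ : Odd k₁) (h₂ : Odd k₂)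
    (hp₁ : 0 < k₁) (hp₂ : 0 < k₂) (hco : Nat.Coprime k₁ k₂) :
    gaussG m (k₁ * k₂) = gaussG m k₁ * gaussG m k₂ := by
  have hJJ : ((jacobiSym k₂ k₁ * jacobiSym k₁ k₂ : ℤ) : ℂ)
      = (-1 : ℂ) ^ (k₁ / 2 * (k₂ / 2)) := by
    have hrec := jacobiSym.quadratic_reciprocity h₁ h₂
    have hgcd : Int.gcd (k₂ : ℤ) (k₁ : ℤ) = 1 := by
      simpa [Int.gcd_natCast_natCast] using hco.symm
    have hsq : jacobiSym (k₂ : ℤ) k₁ ^ 2 = 1 := jacobiSym.sq_one hgcd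
    have : (jacobiSym k₂ k₁ * jacobiSym k₁ k₂ : ℤ)
        = (-1) ^ (k₁ / 2 * (k₂ / 2)) := by
      calc jacobiSym (k₂ : ℤ) k₁ * jacobiSym (k₁ : ℤ) k₂
          = (-1) ^ (k₁ / 2 * (k₂ / 2)) * (jacobiSym (k₂ : ℤ) k₁ ^ 2) := by
            rw [hrec]; ring
        _ = (-1) ^ (k₁ / 2 * (k₂ / 2)) := by rw [hsq, mul_one]
    rw [this]; push_cast; ring
  rw [gaussG_eq, gaussG_eq, gaussG_eq, gaussS_mul m k₁ k₂ hp₁ hp₂ hco, hJJ]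
  rw [show ((1 - Complex.I) / 2 + (jacobiSym (-1) (k₁*k₂) : ℂ) * (1 + Complex.I) / 2) *
      ((-1 : ℂ) ^ (k₁ / 2 * (k₂ / 2)) * (gaussS m k₁ * gaussS m k₂)) =
      (((1 - Complex.I) / 2 + (jacobiSym (-1) (k₁*k₂) : ℂ) * (1 + Complex.I) / 2) *
      ((-1 : ℂ) ^ (k₁ / 2 * (k₂ / 2)))) * (gaussS m k₁ * gaussS m k₂) from by ring]
  rw [eps_mul k₁ k₂ h₁ h₂ hp₁ hp₂]
  ring
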